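/- Let w : ℝ^d → ℝ be continuous, and suppose that for every ξ' ∈ ℝ^{d-1} and every coordinate index j, the single-variable function ξ_j ↦ w(ξ_j; ξ') extends to an entire function on ℂ which is a polynomial of degree at most 1 in z_j. Then w extends to an entire function on ℂ^d of the form w(z) = Σ_{α ∈ {0,1}^d} a_α z^α with all coefficients a_α real (i.e., w is a multilinear polynomial with real coefficients). -/

import Mathlib

open Finset

/-- Substitute the coordinates in `U` by the indicator function of `T`. -/
private def slmSubst (d : ℕ) (ξ : Fin d → ℝ) (U T : Finset (Fin d)) : Fin d → ℝ :=
  fun i => if i ∈ U then (if i ∈ T then 1 else 0) else ξ i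

private lemma slm_aff (d : ℕ) (w : (Fin d → ℝ) → ℝ)
    (hlin : ∀ (j : Fin d) (ξ : Fin d → ℝ), ∃ a b : ℝ,
      ∀ x : ℝ, w (Function.update ξ j x) = a * x + b)
    (j : Fin d) (ξ : Fin d → ℝ) :
    w ξ = ξ j * (w (Function.update ξ j 1) - w (Function.update ξ j 0))
      + w (Function.update ξ j 0) := by
  obtain ⟨a, b, h⟩ := hlin j ξ
  have h0 := h 0
  have h1 := h 1
  have hx := h (ξ j)
  rw [Function.update_eq_self] at hx
  rw [h0, h1]
  linarith

private lemma slm_key (d : ℕ) (w : (Fin d → ℝ) → ℝ)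
    (hlin : ∀ (j : Fin d) (ξ : Fin d → ℝ), ∃ a b : ℝ,
      ∀ x : ℝ, w (Function.update ξ j x) = a * x + b) :
    ∀ U : Finset (Fin d), ∀ ξ : Fin d → ℝ,
      w ξ = ∑ S ∈ U.powerset, (∏ i ∈ S, ξ i) *
        ∑ T ∈ S.powerset, (-1 : ℝ) ^ (S.card - T.card) * w (slmSubst d ξ U T) := by
  intro U
  induction U using Finset.induction_on with
  | empty =>
      intro ξ
      have : slmSubst d ξ ∅ ∅ = ξ := by funext i; simp [slmSubst]
      simp [this]
  | insert _ _ hj =>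
      rename_i j U IH
      intro ξ
      set ξ0 := Function.update ξ j 0 with hξ0
      set ξ1 := Function.update ξ j 1 with hξ1
      -- substitution facts
      have sub0 : ∀ T ∈ U.powerset, slmSubst d ξ (insert j U) T = slmSubst d ξ0 U T := by
        intro T hT
        rw [mem_powerset] at hT
        funext i
        by_cases hij : i = j
        · subst hij
          have hiU : i ∉ U := hj
          have hiT : i ∉ T := fun h => hj (hT h)
          simp [slmSubst, hiU, hiT, hξ0]
        · simp [slmSubst, Finset.mem_insert, hij, hξ0, Function.update_of_ne hij]
      have sub1 : ∀ T ∈ U.powerset, slmSubst d ξ (insert j U) (insert j T)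
          = slmSubst d ξ1 U T := by
        intro T hT
        rw [mem_powerset] at hT
        funext i
        by_cases hij : i = j
        · subst hij
          have hiU : i ∉ U := hj
          simp [slmSubst, hiU, hξ1]
        · simp [slmSubst, Finset.mem_insert, hij, hξ1, Function.update_of_ne hij]
      -- abbreviations
      set A : Finset (Fin d) → ℝ := fun S =>
        ∑ T ∈ S.powerset, (-1 : ℝ) ^ (S.card - T.card) * w (slmSubst d ξ0 U T) with hA
      set B : Finset (Fin d) → ℝ := fun S =>
        ∑ T ∈ S.powerset, (-1 : ℝ) ^ (S.card - T.card) * w (slmSubst d ξ1 U T) with hB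
      have prod_eq : ∀ c : ℝ, ∀ S ∈ U.powerset,
          (∏ i ∈ S, Function.update ξ j c i) = ∏ i ∈ S, ξ i := by
        intro c S hS
        rw [mem_powerset] at hS
        refine Finset.prod_congr rfl fun i hi => ?_
        have : i ≠ j := fun h => hj (hS (h ▸ hi))
        exact Function.update_of_ne this _ _
      have hA' : w ξ0 = ∑ S ∈ U.powerset, (∏ i ∈ S, ξ i) * A S := by
        rw [IH ξ0]
        exact Finset.sum_congr rfl fun S hS => by rw [prod_eq 0 S hS]
      have hB' : w ξ1 = ∑ S ∈ U.powerset, (∏ i ∈ S, ξ i) * B S := by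
        rw [IH ξ1]
        exact Finset.sum_congr rfl fun S hS => by rw [prod_eq 1 S hS]
      have haff := slm_aff d w hlin j ξ
      rw [Finset.sum_powerset_insert hj]
      have e1 : ∑ S ∈ U.powerset, (∏ i ∈ S, ξ i) *
          (∑ T ∈ S.powerset, (-1 : ℝ) ^ (S.card - T.card) * w (slmSubst d ξ (insert j U) T))
          = ∑ S ∈ U.powerset, (∏ i ∈ S, ξ i) * A S := by
        refine Finset.sum_congr rfl fun S hS => ?_
        congr 1
        refine Finset.sum_congr rfl fun T hT => ?_
        rw [sub0 T (Finset.mem_powerset.2 ((Finset.mem_powerset.1 hT).trans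
          (Finset.mem_powerset.1 hS)))]
      have e2 : ∑ S ∈ U.powerset, (∏ i ∈ insert j S, ξ i) *
          (∑ T ∈ (insert j S).powerset, (-1 : ℝ) ^ ((insert j S).card - T.card) *
            w (slmSubst d ξ (insert j U) T))
          = ∑ S ∈ U.powerset, ξ j * ((∏ i ∈ S, ξ i) * (B S - A S)) := by
        refine Finset.sum_congr rfl fun S hS => ?_
        rw [mem_powerset] at hS
        have hjS : j ∉ S := fun h => hj (hS h)
        rw [Finset.prod_insert hjS, Finset.sum_powerset_insert hjS,
          Finset.card_insert_of_notMem hjS]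
        have inner1 : ∑ T ∈ S.powerset, (-1 : ℝ) ^ (S.card + 1 - T.card) *
            w (slmSubst d ξ (insert j U) T) = -A S := by
          rw [hA, ← Finset.sum_neg_distrib]
          refine Finset.sum_congr rfl fun T hT => ?_
          rw [mem_powerset] at hT
          have hc : T.card ≤ S.card := Finset.card_le_card hT
          have : S.card + 1 - T.card = (S.card - T.card) + 1 := by omega
          rw [this, pow_succ, sub0 T (Finset.mem_powerset.2 (hT.trans hS))]
          ring
        have inner2 : ∑ T ∈ S.powerset, (-1 : ℝ) ^ (S.card + 1 - (insert j T).card) *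
            w (slmSubst d ξ (insert j U) (insert j T)) = B S := by
          rw [hB]
          refine Finset.sum_congr rfl fun T hT => ?_
          rw [mem_powerset] at hT
          have hjT : j ∉ T := fun h => hj (hS (hT h))
          have hc : T.card ≤ S.card := Finset.card_le_card hT
          rw [Finset.card_insert_of_notMem hjT]
          have : S.card + 1 - (T.card + 1) = S.card - T.card := by omega
          rw [this, sub1 T (Finset.mem_powerset.2 (hT.trans hS))]
        rw [inner1, inner2]
        ring
      have e3 : ∑ S ∈ U.powerset, ξ j * ((∏ i ∈ S, ξ i) * (B S - A S))
          = ξ j * (∑ S ∈ U.powerset, (∏ i ∈ S, ξ i) * B S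
            - ∑ S ∈ U.powerset, (∏ i ∈ S, ξ i) * A S) := by
        rw [mul_sub, Finset.mul_sum, Finset.mul_sum, ← Finset.sum_sub_distrib]
        exact Finset.sum_congr rfl fun S _ => by ring
      rw [e1, e2, e3, ← hA', ← hB']
      rw [← hξ0, ← hξ1] at haff
      linarith

private lemma slm_diff (d : ℕ) (S : Finset (Fin d)) :
    Differentiable ℂ (fun z : Fin d → ℂ => ∏ j ∈ S, z j) := by
  induction S using Finset.induction_on with
  | empty => simpa using differentiable_const (1 : ℂ)
  | insert _ _ hjS =>
      rename_i i S IH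
      have : (fun z : Fin d → ℂ => ∏ j ∈ insert i S, z j)
          = fun z => z i * ∏ j ∈ S, z j := by
        funext z; rw [Finset.prod_insert hjS]
      rw [this]
      exact (differentiable_apply i).mul IH

/-- If a continuous `w : ℝ^d → ℝ` is, in each coordinate separately (with the other
coordinates fixed), the restriction of an entire function that is a polynomial of
degree at most one, then `w` extends to a multilinear polynomial on `ℂ^d` with real
coefficients: `w(z) = Σ_{α ∈ {0,1}^d} a_α z^α`. -/
theorem continuous_separately_linear_multilinear
    (d : ℕ) (w : (Fin d → ℝ) → ℝ) (hw : Continuous w)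
    (hlin : ∀ (j : Fin d) (ξ : Fin d → ℝ), ∃ a b : ℝ,
      ∀ x : ℝ, w (Function.update ξ j x) = a * x + b) :
    ∃ a : Finset (Fin d) → ℝ, ∃ W : (Fin d → ℂ) → ℂ,
      Differentiable ℂ W ∧
      (∀ z : Fin d → ℂ, W z = ∑ S : Finset (Fin d), (a S : ℂ) * ∏ j ∈ S, z j) ∧
      (∀ ξ : Fin d → ℝ, W (fun j => (ξ j : ℂ)) = (w ξ : ℂ)) := by
  set a : Finset (Fin d) → ℝ := fun S =>
    ∑ T ∈ S.powerset, (-1 : ℝ) ^ (S.card - T.card) *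
      w (fun i => if i ∈ T then 1 else 0) with ha
  refine ⟨a, fun z => ∑ S : Finset (Fin d), (a S : ℂ) * ∏ j ∈ S, z j, ?_, fun z => rfl, ?_⟩
  · apply Differentiable.fun_sum
    intro S _
    exact (differentiable_const _).mul (slm_diff d S)
  · intro ξ
    have key := slm_key d w hlin Finset.univ ξ
    have hsub : ∀ T : Finset (Fin d), slmSubst d ξ Finset.univ T
        = fun i => if i ∈ T then 1 else 0 := by
      intro T; funext i; simp [slmSubst]
    have : w ξ = ∑ S : Finset (Fin d), a S * ∏ i ∈ S, ξ i := by
      rw [key, Finset.powerset_univ]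
      refine Finset.sum_congr rfl fun S _ => ?_
      rw [ha]
      simp only [hsub]
      ring
    rw [this]
    push_cast
    rfl
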